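/- Suppose β_0 > 0. Let x ≠ y be real numbers with Ostrowski representations Σ_k b_{k+1}β_k and Σ_k c_{k+1}β_k, and let n be minimal with b_{n+1} ≠ c_{n+1}. Then x < y if and only if either (b_{n+1} > c_{n+1} and n is odd) or (c_{n+1} > b_{n+1} and n is even). -/

import Mathlib

open Filter

private lemma ost_zeta_irr (aCF : ℕ → ℤ) (ζ : ℕ → ℝ) (a : ℝ) (ha : Irrational a)
    (hζ0 : ζ 0 = a)
    (hζ : ∀ k, ζ k = (aCF k : ℝ) + 1 / ζ (k + 1)) :
    ∀ k, Irrational (ζ k) := by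
  intro k
  induction k with
  | zero => rwa [hζ0]
  | succ k ih =>
    have h1 : (1 : ℝ) / ζ (k+1) = ζ k - (aCF k : ℝ) := by linarith [hζ k]
    have h3 : Irrational (1 / ζ (k+1)) := by rw [h1]; exact Irrational.sub_intCast ih _
    rintro ⟨q, hq⟩
    apply h3
    exact ⟨1/q, by rw [← hq]; push_cast; ring⟩

private lemma ost_zeta_gt (aCF : ℕ → ℤ) (ζ : ℕ → ℝ)
    (hfloor : ∀ k, aCF k = ⌊ζ k⌋)
    (hζ : ∀ k, ζ k = (aCF k : ℝ) + 1 / ζ (k + 1))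
    (hirr : ∀ k, Irrational (ζ k)) :
    ∀ k, 1 < ζ (k+1) := by
  intro k
  have h1 : (1:ℝ) / ζ (k+1) = ζ k - (aCF k : ℝ) := by linarith [hζ k]
  have hlow : ((⌊ζ k⌋ : ℝ)) ≤ ζ k := Int.floor_le _
  have hup : ζ k < (⌊ζ k⌋ : ℝ) + 1 := Int.lt_floor_add_one _
  have hne : ζ k ≠ ((⌊ζ k⌋ : ℝ)) := (hirr k).ne_int _
  have h2 : 0 < 1 / ζ (k+1) := by
    rw [h1, hfloor k]
    rcases lt_or_eq_of_le hlow with h | h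
    · linarith
    · exact absurd h.symm hne
  have h3 : 0 < ζ (k+1) := one_div_pos.mp h2
  have h4 : 1 / ζ (k+1) < 1 := by rw [h1, hfloor k]; linarith
  have := (div_lt_one h3).mp h4
  linarith

private lemma ost_theta (aCF : ℕ → ℤ) (ζ β : ℕ → ℝ)
    (hζgt : ∀ k, 1 < ζ (k+1))
    (hζ : ∀ k, ζ k = (aCF k : ℝ) + 1 / ζ (k + 1))
    (hβ0 : β 0 = ζ 0 - (aCF 0 : ℝ))
    (hβ1 : β 1 = (aCF 1 : ℝ) * β 0 - 1)
    (hβrec : ∀ k, β (k+2) = (aCF (k+2) : ℝ) * β (k+1) + β k) :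
    ∀ k, 0 < (-1:ℝ)^k * β k ∧ ζ (k+2) * ((-1:ℝ)^(k+1) * β (k+1)) = (-1:ℝ)^k * β k := by
  have hpos : ∀ k, 0 < ζ (k+1) := fun k => lt_trans one_pos (hζgt k)
  have hβ0' : β 0 = 1 / ζ 1 := by rw [hβ0, hζ 0]; ring
  have hprod : ∀ k, (ζ (k+1) - (aCF (k+1):ℝ)) * ζ (k+2) = 1 := by
    intro k
    rw [hζ (k+1)]
    have h3 : ζ (k+2) ≠ 0 := (hpos (k+1)).ne'
    field_simp
    ring
  intro k
  induction k with
  | zero =>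
    constructor
    · have : (0:ℝ) < 1 / ζ 1 := one_div_pos.mpr (hpos 0)
      simpa [hβ0'] using this
    · have h2 : ζ 1 ≠ 0 := (hpos 0).ne'
      have h3 : ζ 2 ≠ 0 := (hpos 1).ne'
      have hp := hprod 0
      rw [hβ1, hβ0']
      field_simp
      ring_nf
      ring_nf at hp
      nlinarith [hp]
  | succ k ih =>
    obtain ⟨hposk, heq⟩ := ih
    have hz := hζgt (k+1)
    have hX : 0 < (-1:ℝ)^(k+1) * β (k+1) := by
      by_contra h
      push_neg at h
      have h5 : ζ (k+2) * ((-1:ℝ)^(k+1) * β (k+1)) ≤ 0 :=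
        mul_nonpos_of_nonneg_of_nonpos (hpos (k+1)).le h
      linarith [heq]
    refine ⟨hX, ?_⟩
    have hp := hprod (k+1)
    linear_combination (ζ (k+3) * (-1:ℝ)^(k+2)) * hβrec k - ζ (k+3) * heq -
      ((-1:ℝ)^k * β (k+1)) * hp

private lemma ost_step (β : ℕ → ℝ) (u : ℕ → ℕ)
    (h : Summable (fun k => (u (k+1) : ℝ) * β k)) (j : ℕ) :
    ∑' k : ℕ, (u (k+j+1) : ℝ) * β (k+j)
      = (u (j+1) : ℝ) * β j + ∑' k : ℕ, (u (k+(j+1)+1) : ℝ) * β (k+(j+1)) := by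
  have hs : Summable (fun k => (u (k+j+1) : ℝ) * β (k+j)) :=
    (summable_nat_add_iff j).2 h
  have h1 := Summable.tsum_eq_zero_add hs
  have h2 : ∑' (k : ℕ), (u (k+1+j+1) : ℝ) * β (k+1+j)
      = ∑' k : ℕ, (u (k+(j+1)+1) : ℝ) * β (k+(j+1)) := by
    apply tsum_congr
    intro i
    have e1 : i+1+j+1 = i+(j+1)+1 := by omega
    have e2 : i+1+j = i+(j+1) := by omega
    rw [e1, e2]
  rw [h2] at h1
  have e3 : 0+j+1 = j+1 := by omega
  have e4 : 0+j = j := by omega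
  rw [e3, e4] at h1
  exact h1

private lemma ost_tail (aCF : ℕ → ℤ) (β θ : ℕ → ℝ)
    (hβθ : ∀ k, β k = (-1 : ℝ)^k * θ k)
    (hθpos : ∀ k, 0 < θ k)
    (hθanti : ∀ k, θ (k+1) ≤ θ k)
    (hθrec : ∀ k, (aCF (k+2) : ℝ) * θ (k+1) = θ k - θ (k+2))
    (hθ0 : Filter.Tendsto θ Filter.atTop (nhds 0))
    (f : ℕ → ℕ)
    (hfle : ∀ k, (f (k+2) : ℤ) ≤ aCF (k+2))
    (hsum : Summable (fun k => (f (k+1) : ℝ) * β k))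
    (m : ℕ) :
    (Even m → -θ m ≤ ∑' k : ℕ, (f (k+(m+1)+1) : ℝ) * β (k+(m+1)) ∧
        ∑' k : ℕ, (f (k+(m+1)+1) : ℝ) * β (k+(m+1)) ≤ θ (m+1)) ∧
    (¬ Even m → -θ (m+1) ≤ ∑' k : ℕ, (f (k+(m+1)+1) : ℝ) * β (k+(m+1)) ∧
        ∑' k : ℕ, (f (k+(m+1)+1) : ℝ) * β (k+(m+1)) ≤ θ m) := by
  set F : ℕ → ℝ := fun k => (f (k+1) : ℝ) * β k with hF
  set T : ℕ → ℝ := fun j => ∑' k : ℕ, F (k + j) with hT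
  have hshift : ∀ j, Summable (fun k => F (k + j)) := fun j => (summable_nat_add_iff j).2 hsum
  have hstep : ∀ j, T j = F j + T (j+1) := by
    intro j
    have h1 := Summable.tsum_eq_zero_add (hshift j)
    have h2 : ∑' (k : ℕ), F (k + 1 + j) = T (j+1) :=
      tsum_congr (fun k => by congr 1; omega)
    rw [show (0:ℕ) + j = j from Nat.zero_add j] at h1
    rw [h2] at h1
    exact h1
  have habsle : ∀ k, |F (k+1)| ≤ θ k - θ (k+2) := by
    intro k
    have h1 : |β (k+1)| = θ (k+1) := by
      rw [hβθ (k+1), abs_mul, abs_pow, abs_neg, abs_one, one_pow, one_mul,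
        abs_of_pos (hθpos _)]
    have h2 : |F (k+1)| = (f (k+2) : ℝ) * θ (k+1) := by
      show |(f (k+1+1) : ℝ) * β (k+1)| = _
      rw [abs_mul, h1, Nat.abs_cast]
    rw [h2, ← hθrec k]
    have h3 : (f (k+2) : ℝ) ≤ (aCF (k+2) : ℝ) := by exact_mod_cast hfle k
    exact mul_le_mul_of_nonneg_right h3 (hθpos _).le
  have htel : ∀ j N, ∑ i ∈ Finset.range N, (θ (i+j) - θ (i+j+2))
      = θ j + θ (j+1) - θ (N+j) - θ (N+j+1) := by
    intro j N
    induction N with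
    | zero =>
      rw [Finset.sum_range_zero]
      have e1 : (0:ℕ)+j = j := by omega
      rw [e1]
      ring
    | succ N ih =>
      rw [Finset.sum_range_succ, ih]
      have e1 : θ (N+1+j+1) = θ (N+j+2) := by congr 1; omega
      have e2 : θ (N+1+j) = θ (N+j+1) := by congr 1; omega
      rw [e1, e2]
      ring
  have htelsum : Summable (fun k => θ k - θ (k+2)) := by
    apply summable_of_sum_range_le (c := θ 0 + θ 1)
    · intro k
      have h1 := hθanti k
      have h2 := hθanti (k+1)
      linarith
    · intro N
      have h := htel 0 N
      simp only [Nat.add_zero] at h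
      rw [h]
      linarith [hθpos N, hθpos (N+1)]
  have habssum : Summable (fun k => |F (k+1)|) :=
    Summable.of_nonneg_of_le (fun k => abs_nonneg _) habsle htelsum
  have habssum' : ∀ j, Summable (fun k => |F (k + (j+1))|) := by
    intro j
    have h := (summable_nat_add_iff (f := fun k => |F (k+1)|) j).2 habssum
    exact h
  have hcoarse : ∀ j, |T (j+1)| ≤ θ j + θ (j+1) := by
    intro j
    have h1 : |T (j+1)| ≤ ∑' k : ℕ, |F (k + (j+1))| := by
      have := norm_tsum_le_tsum_norm (f := fun k => F (k + (j+1)))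
        (by simpa [Real.norm_eq_abs] using habssum' j)
      simpa [Real.norm_eq_abs] using this
    refine h1.trans (Summable.tsum_le_of_sum_range_le (habssum' j) ?_)
    intro N
    have h2 : ∀ i, |F (i + (j+1))| ≤ θ (i+j) - θ (i+j+2) := fun i => habsle (i+j)
    calc ∑ i ∈ Finset.range N, |F (i + (j+1))|
        ≤ ∑ i ∈ Finset.range N, (θ (i+j) - θ (i+j+2)) :=
          Finset.sum_le_sum (fun i _ => h2 i)
      _ = θ j + θ (j+1) - θ (N+j) - θ (N+j+1) := htel j N
      _ ≤ θ j + θ (j+1) := by linarith [hθpos (N+j), hθpos (N+j+1)]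
  have key_low : ∀ J j, (if Even j then -θ j else -θ (j+1)) - 2 * θ (J + j) ≤ T (j+1) := by
    intro J
    induction J with
    | zero =>
      intro j
      have h2 : -(θ j + θ (j+1)) ≤ T (j+1) := neg_le_of_abs_le (hcoarse j)
      rw [show (0:ℕ) + j = j from Nat.zero_add j]
      split_ifs with h
      · linarith [hθanti j, hθpos j, hθpos (j+1)]
      · linarith [hθanti j, hθpos j]
    | succ J ih =>
      intro j
      have hstepj := hstep (j+1)
      have ih' := ih (j+1)
      have hrec := hθrec j
      have hfle' : (f (j+2) : ℝ) ≤ (aCF (j+2) : ℝ) := by exact_mod_cast hfle j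
      have hθJ : θ (J + 1 + j) = θ (J + (j+1)) := by congr 1; omega
      rcases Nat.even_or_odd j with hj | hj
      · have hj1 : ¬ Even (j+1) := by simp [Nat.even_add_one, hj]
        rw [if_neg hj1] at ih'
        have hFsign : F (j+1) = -((f (j+2) : ℝ) * θ (j+1)) := by
          show (f (j+1+1) : ℝ) * β (j+1) = _
          rw [hβθ (j+1), hj.add_one.neg_one_pow]
          ring
        have hFge : -((aCF (j+2):ℝ) * θ (j+1)) ≤ F (j+1) := by
          rw [hFsign]
          have := mul_le_mul_of_nonneg_right hfle' (hθpos (j+1)).le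
          linarith
        rw [if_pos hj, hstepj, hθJ]
        linarith
      · have hj' : ¬ Even j := Nat.not_even_iff_odd.mpr hj
        have hj1 : Even (j+1) := hj.add_one
        rw [if_pos hj1] at ih'
        have hFsign : F (j+1) = (f (j+2) : ℝ) * θ (j+1) := by
          show (f (j+1+1) : ℝ) * β (j+1) = _
          rw [hβθ (j+1), hj1.neg_one_pow]
          ring
        have hFge : 0 ≤ F (j+1) := by
          rw [hFsign]
          exact mul_nonneg (Nat.cast_nonneg _) (hθpos _).le
        rw [if_neg hj', hstepj, hθJ]
        linarith
  have key_up : ∀ J j, T (j+1) ≤ (if Even j then θ (j+1) else θ j) + 2 * θ (J + j) := by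
    intro J
    induction J with
    | zero =>
      intro j
      have h2 : T (j+1) ≤ θ j + θ (j+1) := le_of_abs_le (hcoarse j)
      rw [show (0:ℕ) + j = j from Nat.zero_add j]
      split_ifs with h
      · linarith [hθpos j]
      · linarith [hθanti j, hθpos j]
    | succ J ih =>
      intro j
      have hstepj := hstep (j+1)
      have ih' := ih (j+1)
      have hrec := hθrec j
      have hfle' : (f (j+2) : ℝ) ≤ (aCF (j+2) : ℝ) := by exact_mod_cast hfle j
      have hθJ : θ (J + 1 + j) = θ (J + (j+1)) := by congr 1; omega
      rcases Nat.even_or_odd j with hj | hj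
      · have hj1 : ¬ Even (j+1) := by simp [Nat.even_add_one, hj]
        rw [if_neg hj1] at ih'
        have hFsign : F (j+1) = -((f (j+2) : ℝ) * θ (j+1)) := by
          show (f (j+1+1) : ℝ) * β (j+1) = _
          rw [hβθ (j+1), hj.add_one.neg_one_pow]
          ring
        have hFle : F (j+1) ≤ 0 := by
          rw [hFsign]
          have : (0:ℝ) ≤ (f (j+2) : ℝ) * θ (j+1) :=
            mul_nonneg (Nat.cast_nonneg _) (hθpos _).le
          linarith
        rw [if_pos hj, hstepj, hθJ]
        linarith
      · have hj' : ¬ Even j := Nat.not_even_iff_odd.mpr hj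
        have hj1 : Even (j+1) := hj.add_one
        rw [if_pos hj1] at ih'
        have hFsign : F (j+1) = (f (j+2) : ℝ) * θ (j+1) := by
          show (f (j+1+1) : ℝ) * β (j+1) = _
          rw [hβθ (j+1), hj1.neg_one_pow]
          ring
        have hFle : F (j+1) ≤ (aCF (j+2):ℝ) * θ (j+1) := by
          rw [hFsign]
          exact mul_le_mul_of_nonneg_right hfle' (hθpos _).le
        rw [if_neg hj', hstepj, hθJ]
        linarith
  have hθtail : ∀ j, Tendsto (fun J => θ (J + j)) atTop (nhds 0) := by
    intro j
    exact hθ0.comp (tendsto_add_atTop_nat j)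
  have low : ∀ j, (if Even j then -θ j else -θ (j+1)) ≤ T (j+1) := by
    intro j
    have h1 : Tendsto (fun J => (if Even j then -θ j else -θ (j+1)) - 2 * θ (J + j)) atTop
        (nhds ((if Even j then -θ j else -θ (j+1)) - 2 * 0)) :=
      tendsto_const_nhds.sub ((hθtail j).const_mul 2)
    rw [mul_zero, sub_zero] at h1
    exact le_of_tendsto h1 (Filter.Eventually.of_forall (fun J => key_low J j))
  have up : ∀ j, T (j+1) ≤ (if Even j then θ (j+1) else θ j) := by
    intro j
    have h1 : Tendsto (fun J => (if Even j then θ (j+1) else θ j) + 2 * θ (J + j)) atTop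
        (nhds ((if Even j then θ (j+1) else θ j) + 2 * 0)) :=
      tendsto_const_nhds.add ((hθtail j).const_mul 2)
    rw [mul_zero, add_zero] at h1
    exact ge_of_tendsto h1 (Filter.Eventually.of_forall (fun J => key_up J j))
  constructor
  · intro hm
    have l1 := low m
    have u1 := up m
    rw [if_pos hm] at l1 u1
    exact ⟨l1, u1⟩
  · intro hm
    have l1 := low m
    have u1 := up m
    rw [if_neg hm] at l1 u1
    exact ⟨l1, u1⟩

private lemma ost_core_even (aCF : ℕ → ℤ) (β θ : ℕ → ℝ)
    (hβθ : ∀ k, β k = (-1 : ℝ)^k * θ k)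
    (hθpos : ∀ k, 0 < θ k)
    (hθanti : ∀ k, θ (k+1) ≤ θ k)
    (hθrec : ∀ k, (aCF (k+2) : ℝ) * θ (k+1) = θ k - θ (k+2))
    (hθ0 : Filter.Tendsto θ Filter.atTop (nhds 0))
    (f g : ℕ → ℕ)
    (hfle : ∀ k, (f (k+2) : ℤ) ≤ aCF (k+2))
    (hfsum : Summable (fun k => (f (k+1) : ℝ) * β k))
    (hgle : ∀ k, (g (k+2) : ℤ) ≤ aCF (k+2))
    (hgsum : Summable (fun k => (g (k+1) : ℝ) * β k))
    (n : ℕ) (hn : Even n) (hlt : f (n+1) < g (n+1))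
    (hgcons : (g (n+2) : ℤ) = aCF (n+2) → g (n+1) = 0) :
    ∑' k : ℕ, (f (k+n+1) : ℝ) * β (k+n) ≤ ∑' k : ℕ, (g (k+n+1) : ℝ) * β (k+n) := by
  have hTf := ost_step β f hfsum n
  have hTg := ost_step β g hgsum n
  have hTg2 := ost_step β g hgsum (n+1)
  have tbf := ost_tail aCF β θ hβθ hθpos hθanti hθrec hθ0 f hfle hfsum n
  have tbg := ost_tail aCF β θ hβθ hθpos hθanti hθrec hθ0 g hgle hgsum (n+1)
  have hfa : ∑' k:ℕ, (f (k+(n+1)+1):ℝ) * β (k+(n+1)) ≤ θ (n+1) := (tbf.1 hn).2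
  have hodd : ¬ Even (n+1) := by simp [Nat.even_add_one, hn]
  have hga : -θ (n+1+1) ≤ ∑' k:ℕ, (g (k+(n+1+1)+1):ℝ) * β (k+(n+1+1)) := (tbg.2 hodd).1
  have eidx : n+1+1 = n+2 := by omega
  rw [eidx] at hga
  simp only [eidx] at hTg2
  have hg2 : (g (n+2) : ℤ) ≤ aCF (n+2) - 1 := by
    rcases lt_or_eq_of_le (hgle n) with h | h
    · omega
    · have h0 := hgcons h
      omega
  have hβn : β n = θ n := by rw [hβθ n, hn.neg_one_pow, one_mul]
  have hβn1 : β (n+1) = -θ (n+1) := by rw [hβθ (n+1), hn.add_one.neg_one_pow]; ring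
  have hltR : (f (n+1) : ℝ) + 1 ≤ (g (n+1) : ℝ) := by
    have h := Nat.succ_le_of_lt hlt
    exact_mod_cast h
  have hg2R : (g (n+2) : ℝ) ≤ (aCF (n+2) : ℝ) - 1 := by
    exact_mod_cast hg2
  have hrec := hθrec n
  have h1 : (g (n+2) : ℝ) * θ (n+1) ≤ ((aCF (n+2):ℝ) - 1) * θ (n+1) :=
    mul_le_mul_of_nonneg_right hg2R (hθpos _).le
  have h2 : ((f (n+1):ℝ) + 1) * θ n ≤ (g (n+1):ℝ) * θ n :=
    mul_le_mul_of_nonneg_right hltR (hθpos _).le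
  rw [hTf, hTg, hTg2, hβn, hβn1]
  nlinarith [hfa, hga, h1, h2, hrec, hθpos n, hθpos (n+1), hθpos (n+2)]

private lemma ost_core_odd (aCF : ℕ → ℤ) (β θ : ℕ → ℝ)
    (hβθ : ∀ k, β k = (-1 : ℝ)^k * θ k)
    (hθpos : ∀ k, 0 < θ k)
    (hθanti : ∀ k, θ (k+1) ≤ θ k)
    (hθrec : ∀ k, (aCF (k+2) : ℝ) * θ (k+1) = θ k - θ (k+2))
    (hθ0 : Filter.Tendsto θ Filter.atTop (nhds 0))
    (f g : ℕ → ℕ)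
    (hfle : ∀ k, (f (k+2) : ℤ) ≤ aCF (k+2))
    (hfsum : Summable (fun k => (f (k+1) : ℝ) * β k))
    (hgle : ∀ k, (g (k+2) : ℤ) ≤ aCF (k+2))
    (hgsum : Summable (fun k => (g (k+1) : ℝ) * β k))
    (n : ℕ) (hn : ¬ Even n) (hlt : f (n+1) < g (n+1))
    (hgcons : (g (n+2) : ℤ) = aCF (n+2) → g (n+1) = 0) :
    ∑' k : ℕ, (g (k+n+1) : ℝ) * β (k+n) ≤ ∑' k : ℕ, (f (k+n+1) : ℝ) * β (k+n) := by
  have hTf := ost_step β f hfsum n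
  have hTg := ost_step β g hgsum n
  have hTg2 := ost_step β g hgsum (n+1)
  have tbf := ost_tail aCF β θ hβθ hθpos hθanti hθrec hθ0 f hfle hfsum n
  have tbg := ost_tail aCF β θ hβθ hθpos hθanti hθrec hθ0 g hgle hgsum (n+1)
  have hfa : -θ (n+1) ≤ ∑' k:ℕ, (f (k+(n+1)+1):ℝ) * β (k+(n+1)) := (tbf.2 hn).1
  have heven : Even (n+1) := Nat.even_add_one.mpr hn
  have hga : ∑' k:ℕ, (g (k+(n+1+1)+1):ℝ) * β (k+(n+1+1)) ≤ θ (n+1+1) := (tbg.1 heven).2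
  have eidx : n+1+1 = n+2 := by omega
  rw [eidx] at hga
  simp only [eidx] at hTg2
  have hg2 : (g (n+2) : ℤ) ≤ aCF (n+2) - 1 := by
    rcases lt_or_eq_of_le (hgle n) with h | h
    · omega
    · have h0 := hgcons h
      omega
  have hβn : β n = -θ n := by
    rw [hβθ n, (Nat.not_even_iff_odd.mp hn).neg_one_pow]; ring
  have hβn1 : β (n+1) = θ (n+1) := by rw [hβθ (n+1), heven.neg_one_pow, one_mul]
  have hltR : (f (n+1) : ℝ) + 1 ≤ (g (n+1) : ℝ) := by
    have h := Nat.succ_le_of_lt hlt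
    exact_mod_cast h
  have hg2R : (g (n+2) : ℝ) ≤ (aCF (n+2) : ℝ) - 1 := by
    exact_mod_cast hg2
  have hrec := hθrec n
  have h1 : (g (n+2) : ℝ) * θ (n+1) ≤ ((aCF (n+2):ℝ) - 1) * θ (n+1) :=
    mul_le_mul_of_nonneg_right hg2R (hθpos _).le
  have h2 : ((f (n+1):ℝ) + 1) * θ n ≤ (g (n+1):ℝ) * θ n :=
    mul_le_mul_of_nonneg_right hltR (hθpos _).le
  rw [hTf, hTg, hTg2, hβn, hβn1]
  nlinarith [hfa, hga, h1, h2, hrec, hθpos n, hθpos (n+1), hθpos (n+2)]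

theorem ostrowski_order_real (a : ℝ) (ha : Irrational a)
    (aCF : ℕ → ℤ) (ζ : ℕ → ℝ)
    (hζ0 : ζ 0 = a)
    (hfloor : ∀ k, aCF k = ⌊ζ k⌋)
    (hζ : ∀ k, ζ k = (aCF k : ℝ) + 1 / ζ (k + 1))
    (p q : ℕ → ℤ)
    (hq0 : q 0 = 1) (hq1 : q 1 = aCF 1)
    (hqrec : ∀ k, q (k + 2) = aCF (k + 2) * q (k + 1) + q k)
    (hp0 : p 0 = aCF 0) (hp1 : p 1 = aCF 1 * aCF 0 + 1)
    (hprec : ∀ k, p (k + 2) = aCF (k + 2) * p (k + 1) + p k)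
    (β : ℕ → ℝ)
    (hβ : ∀ k, β k = (q k : ℝ) * a - (p k : ℝ)) (hβ0 : 0 < β 0)
    (x y : ℝ)
    (b : ℕ → ℕ)
    (hb0 : b 0 = 0)
    (hb1 : (b 1 : ℤ) < aCF 1)
    (hble : ∀ k ≥ 1, (b k : ℤ) ≤ aCF k)
    (hbcons : ∀ k ≥ 1, (b (k + 1) : ℤ) = aCF (k + 1) → b k = 0)
    (hbinf : ∀ m, ∃ k ≥ m, Odd k ∧ (b k : ℤ) < aCF k)
    (hbsum : Summable (fun k : ℕ => (b (k + 1) : ℝ) * β k))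
    (hxrep : x = ∑' k : ℕ, (b (k + 1) : ℝ) * β k)
    (c : ℕ → ℕ)
    (hc0 : c 0 = 0)
    (hc1 : (c 1 : ℤ) < aCF 1)
    (hcle : ∀ k ≥ 1, (c k : ℤ) ≤ aCF k)
    (hccons : ∀ k ≥ 1, (c (k + 1) : ℤ) = aCF (k + 1) → c k = 0)
    (hcinf : ∀ m, ∃ k ≥ m, Odd k ∧ (c k : ℤ) < aCF k)
    (hcsum : Summable (fun k : ℕ => (c (k + 1) : ℝ) * β k))
    (hyrep : y = ∑' k : ℕ, (c (k + 1) : ℝ) * β k)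
    (hxy : x ≠ y) (n : ℕ) (hn : b (n + 1) ≠ c (n + 1))
    (hnmin : ∀ m, m < n → b (m + 1) = c (m + 1)) :
    x < y ↔ (c (n + 1) < b (n + 1) ∧ Odd n) ∨ (b (n + 1) < c (n + 1) ∧ Even n) := by
  -- basic continued fraction facts
  have hζirr := ost_zeta_irr aCF ζ a ha hζ0 hζ
  have hζgt : ∀ k, 1 < ζ (k+1) := ost_zeta_gt aCF ζ hfloor hζ hζirr
  have hβ0eq : β 0 = ζ 0 - (aCF 0 : ℝ) := by
    rw [hβ 0, hq0, hp0, hζ0]; push_cast; ring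
  have hβ1eq : β 1 = (aCF 1 : ℝ) * β 0 - 1 := by
    rw [hβ 1, hβ 0, hq1, hp1, hq0, hp0]; push_cast; ring
  have hβrec : ∀ k, β (k+2) = (aCF (k+2) : ℝ) * β (k+1) + β k := by
    intro k
    rw [hβ (k+2), hβ (k+1), hβ k, hqrec k, hprec k]
    push_cast
    ring
  set θ : ℕ → ℝ := fun k => (-1:ℝ)^k * β k with hθdef
  have hth := ost_theta aCF ζ β hζgt hζ hβ0eq hβ1eq hβrec
  have hθpos : ∀ k, 0 < θ k := fun k => (hth k).1
  have hζθ : ∀ k, ζ (k+2) * θ (k+1) = θ k := fun k => (hth k).2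
  have hβθ : ∀ k, β k = (-1:ℝ)^k * θ k := by
    intro k
    simp only [hθdef]
    rw [← mul_assoc, ← pow_add, Even.neg_one_pow ⟨k, rfl⟩, one_mul]
  have hθanti : ∀ k, θ (k+1) ≤ θ k := by
    intro k
    have h := hζθ k
    nlinarith [hθpos (k+1), hζgt (k+1)]
  have hθrec : ∀ k, (aCF (k+2) : ℝ) * θ (k+1) = θ k - θ (k+2) := by
    intro k
    simp only [hθdef]
    rw [hβrec k]
    ring
  have hθhalf : ∀ k, θ (k+2) ≤ θ k / 2 := by
    intro k
    have h1 := hζθ k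
    have h2 := hζθ (k+1)
    have hz2 := hζgt (k+1)
    have hz3 := hζgt (k+2)
    have ha2 : (1:ℝ) ≤ (aCF (k+2):ℝ) := by
      have : (1:ℤ) ≤ aCF (k+2) := by
        rw [hfloor (k+2)]
        exact Int.le_floor.mpr (by exact_mod_cast (hζgt (k+1)).le)
      exact_mod_cast this
    have hζeq := hζ (k+2)
    have hz3pos : (0:ℝ) < ζ (k+3) := lt_trans one_pos hz3
    have hinv : 0 < 1 / ζ (k+3) := by positivity
    have hge : 2 ≤ ζ (k+2) * ζ (k+3) := by
      have he : (1 + 1/ζ (k+3)) * ζ (k+3) = ζ (k+3) + 1 := by field_simp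
      nlinarith [hz3, hinv]
    have heq2 : θ k = (ζ (k+2) * ζ (k+3)) * θ (k+2) := by
      rw [← h1, ← h2]; ring
    nlinarith [hθpos (k+2), mul_nonneg (by linarith : (0:ℝ) ≤ ζ (k+2)*ζ (k+3) - 2) (hθpos (k+2)).le]
  have hanti : Antitone θ := antitone_nat_of_succ_le hθanti
  have hbdd : BddBelow (Set.range θ) := by
    refine ⟨0, ?_⟩
    rintro xx ⟨k, rfl⟩
    exact (hθpos k).le
  have htend0 : Tendsto θ atTop (nhds (⨅ k, θ k)) := tendsto_atTop_ciInf hanti hbdd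
  have hinf0 : (⨅ k, θ k) = 0 := by
    have hle0 : 0 ≤ ⨅ k, θ k := le_ciInf fun k => (hθpos k).le
    have h2 : Tendsto (fun k => θ (k+2)) atTop (nhds (⨅ k, θ k)) :=
      htend0.comp (tendsto_add_atTop_nat 2)
    have h3 : Tendsto (fun k => θ k / 2) atTop (nhds ((⨅ k, θ k)/2)) := htend0.div_const 2
    have h4 : (⨅ k, θ k) ≤ (⨅ k, θ k) / 2 := le_of_tendsto_of_tendsto' h2 h3 hθhalf
    linarith
  rw [hinf0] at htend0
  -- digit bounds
  have hble' : ∀ k, (b (k+2) : ℤ) ≤ aCF (k+2) := fun k => hble (k+2) (by omega)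
  have hcle' : ∀ k, (c (k+2) : ℤ) ≤ aCF (k+2) := fun k => hcle (k+2) (by omega)
  -- split off the common prefix
  have hx' : x = (∑ i ∈ Finset.range n, (b (i+1):ℝ) * β i)
      + ∑' (k:ℕ), (b (k+n+1):ℝ) * β (k+n) := by
    rw [hxrep]
    exact (Summable.sum_add_tsum_nat_add n hbsum).symm
  have hy' : y = (∑ i ∈ Finset.range n, (c (i+1):ℝ) * β i)
      + ∑' (k:ℕ), (c (k+n+1):ℝ) * β (k+n) := by
    rw [hyrep]
    exact (Summable.sum_add_tsum_nat_add n hcsum).symm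
  have hpre : (∑ i ∈ Finset.range n, (b (i+1):ℝ) * β i)
      = ∑ i ∈ Finset.range n, (c (i+1):ℝ) * β i := by
    refine Finset.sum_congr rfl (fun i hi => ?_)
    rw [hnmin i (Finset.mem_range.mp hi)]
  have hiff : (x < y) ↔ (∑' (k:ℕ), (b (k+n+1):ℝ) * β (k+n)
      < ∑' (k:ℕ), (c (k+n+1):ℝ) * β (k+n)) := by
    rw [hx', hy', hpre]
    exact add_lt_add_iff_left _
  have hneT : (∑' (k:ℕ), (b (k+n+1):ℝ) * β (k+n))
      ≠ ∑' (k:ℕ), (c (k+n+1):ℝ) * β (k+n) := by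
    intro h
    apply hxy
    rw [hx', hy', hpre, h]
  rcases Nat.even_or_odd n with hne | hno
  · have hnotodd : ¬ Odd n := by simp [Nat.not_odd_iff_even.mpr hne]
    rcases Nat.lt_trichotomy (b (n+1)) (c (n+1)) with hlt | heq | hlt
    · have hle := ost_core_even aCF β θ hβθ hθpos hθanti hθrec htend0 b c
        hble' hbsum hcle' hcsum n hne hlt (hccons (n+1) (by omega))
      have hstrict := lt_of_le_of_ne hle hneT
      rw [hiff]
      exact ⟨fun _ => Or.inr ⟨hlt, hne⟩, fun _ => hstrict⟩
    · exact absurd heq hn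
    · have hle := ost_core_even aCF β θ hβθ hθpos hθanti hθrec htend0 c b
        hcle' hcsum hble' hbsum n hne hlt (hbcons (n+1) (by omega))
      rw [hiff]
      constructor
      · intro h
        exact absurd h (not_lt.mpr hle)
      · rintro (⟨h1, h2⟩ | ⟨h1, h2⟩)
        · exact absurd h2 hnotodd
        · omega
  · have hne' : ¬ Even n := Nat.not_even_iff_odd.mpr hno
    rcases Nat.lt_trichotomy (b (n+1)) (c (n+1)) with hlt | heq | hlt
    · have hle := ost_core_odd aCF β θ hβθ hθpos hθanti hθrec htend0 b c
        hble' hbsum hcle' hcsum n hne' hlt (hccons (n+1) (by omega))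
      rw [hiff]
      constructor
      · intro h
        exact absurd h (not_lt.mpr hle)
      · rintro (⟨h1, h2⟩ | ⟨h1, h2⟩)
        · omega
        · exact absurd h2 hne'
    · exact absurd heq hn
    · have hle := ost_core_odd aCF β θ hβθ hθpos hθanti hθrec htend0 c b
        hcle' hcsum hble' hbsum n hne' hlt (hbcons (n+1) (by omega))
      have hstrict := lt_of_le_of_ne hle hneT
      rw [hiff]
      exact ⟨fun _ => Or.inl ⟨hlt, hno⟩, fun _ => hstrict⟩
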